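/- For every even n ≥ 6, the F-chromatic number of the generalized Kneser graph K(n, n/2, 2) is at most 6. -/
import Mathlib


/-- For every even `n ≥ 6`, the F-chromatic number of the generalized Kneser graph
`K(n, n/2, 2)` is at most `6`: there are `6` Frankl sets covering all `(n/2)`-element
subsets of `{1,…,n}`. -/
theorem fChromatic_s2_le_six (n : ℕ) (hn : Even n) (h6 : 6 ≤ n) :
    ∃ A : Fin 6 → Finset (Fin n), (∀ i, 2 ≤ (A i).card) ∧
      ∀ v : Finset (Fin n), v.card = n / 2 →
        ∃ i, (A i).card + 2 ≤ 2 * (v ∩ A i).card := by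
  obtain ⟨m, rfl⟩ := hn
  set a : Fin (m + m) := ⟨0, by omega⟩ with ha
  set b : Fin (m + m) := ⟨1, by omega⟩ with hb
  set c : Fin (m + m) := ⟨2, by omega⟩ with hc
  have hab : a ≠ b := by simp [ha, hb, Fin.ext_iff]
  have hbc : b ≠ c := by simp [hb, hc, Fin.ext_iff]
  have hac : a ≠ c := by simp [ha, hc, Fin.ext_iff]
  have hcardpair : ∀ x y : Fin (m + m), x ≠ y → ({x, y} : Finset (Fin (m + m))).card = 2 :=
    fun x y h => Finset.card_pair h
  refine ⟨![{a, b}, {b, c}, {a, c}, {a, b}ᶜ, {b, c}ᶜ, {a, c}ᶜ], ?_, ?_⟩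
  · intro i
    have h1 := hcardpair _ _ hab
    have h2 := hcardpair _ _ hbc
    have h3 := hcardpair _ _ hac
    have g1 : 2 ≤ ({a, b} : Finset (Fin (m + m))).card := by rw [h1]
    have g2 : 2 ≤ ({b, c} : Finset (Fin (m + m))).card := by rw [h2]
    have g3 : 2 ≤ ({a, c} : Finset (Fin (m + m))).card := by rw [h3]
    have g4 : 2 ≤ (({a, b} : Finset (Fin (m + m)))ᶜ).card := by
      rw [Finset.card_compl, Fintype.card_fin, h1]; omega
    have g5 : 2 ≤ (({b, c} : Finset (Fin (m + m)))ᶜ).card := by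
      rw [Finset.card_compl, Fintype.card_fin, h2]; omega
    have g6 : 2 ≤ (({a, c} : Finset (Fin (m + m)))ᶜ).card := by
      rw [Finset.card_compl, Fintype.card_fin, h3]; omega
    fin_cases i
    exacts [g1, g2, g3, g4, g5, g6]
  · intro v hv
    have hv' : v.card = m := by omega
    -- helper: if both x, y in v then pair set works
    have hin : ∀ x y : Fin (m + m), x ≠ y → x ∈ v → y ∈ v →
        ({x, y} : Finset (Fin (m + m))).card + 2 ≤ 2 * (v ∩ {x, y}).card := by
      intro x y hxy hx hy
      have : v ∩ {x, y} = {x, y} := by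
        apply Finset.inter_eq_right.mpr
        intro z hz
        simp only [Finset.mem_insert, Finset.mem_singleton] at hz
        rcases hz with rfl | rfl <;> assumption
      rw [this, hcardpair _ _ hxy]
    have hout : ∀ x y : Fin (m + m), x ≠ y → x ∉ v → y ∉ v →
        (({x, y} : Finset (Fin (m + m)))ᶜ).card + 2 ≤ 2 * (v ∩ {x, y}ᶜ).card := by
      intro x y hxy hx hy
      have hsub : v ∩ ({x, y} : Finset (Fin (m + m)))ᶜ = v := by
        apply Finset.inter_eq_left.mpr
        intro z hz
        simp only [Finset.mem_compl, Finset.mem_insert, Finset.mem_singleton]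
        rintro (rfl | rfl) <;> [exact hx hz; exact hy hz]
      rw [hsub, hv', Finset.card_compl, hcardpair _ _ hxy]
      simp only [Fintype.card_fin]
      omega
    by_cases hav : a ∈ v <;> by_cases hbv : b ∈ v <;> by_cases hcv : c ∈ v
    · exact ⟨0, by simpa using hin a b hab hav hbv⟩
    · exact ⟨0, by simpa using hin a b hab hav hbv⟩
    · exact ⟨2, by simpa using hin a c hac hav hcv⟩
    · exact ⟨4, by simpa using hout b c hbc hbv hcv⟩
    · exact ⟨1, by simpa using hin b c hbc hbv hcv⟩
    · exact ⟨5, by simpa using hout a c hac hav hcv⟩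
    · exact ⟨3, by simpa using hout a b hab hav hbv⟩
    · exact ⟨3, by simpa using hout a b hab hav hbv⟩
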